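/- Let y be a node of G_t in the ILT model whose binary descendant sequence (of length t, with 1 denoting a cloning step) contains exactly k zeros, descending from a node x of G_0. Then 2^k·(deg_0(x) + 1) + t − k − 1 ≤ deg_t(y) ≤ 2^k·(deg_0(x) + t − k + 1) − 1. -/

import Mathlib

open SimpleGraph Finset

universe u
variable {V : Type u}

/-- One step of the Iterated Local Transitivity model: every vertex `x` gets a
clone `Sum.inr x` joined to `x` and all of its neighbours; old vertices are `Sum.inl`. -/
def ILTstep (G : SimpleGraph V) : SimpleGraph (V ⊕ V) where
  Adj a b := match a, b with
    | Sum.inl x, Sum.inl y => G.Adj x y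
    | Sum.inl x, Sum.inr y => x = y ∨ G.Adj x y
    | Sum.inr x, Sum.inl y => x = y ∨ G.Adj x y
    | Sum.inr _, Sum.inr _ => False
  symm := by
    constructor
    rintro (x | x) (y | y) h
    · exact G.adj_symm h
    · exact h.imp Eq.symm (fun hh => G.adj_symm hh)
    · exact h.imp Eq.symm (fun hh => G.adj_symm hh)
    · exact h.elim
  loopless := by
    constructor
    rintro (x | x) h
    · exact G.irrefl h
    · exact h

instance ILTstepDecAdj (G : SimpleGraph V) [DecidableEq V] [DecidableRel G.Adj] :
    DecidableRel (ILTstep G).Adj := fun a b =>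
  match a, b with
  | Sum.inl x, Sum.inl y => inferInstanceAs (Decidable (G.Adj x y))
  | Sum.inl x, Sum.inr y => inferInstanceAs (Decidable (x = y ∨ G.Adj x y))
  | Sum.inr x, Sum.inl y => inferInstanceAs (Decidable (x = y ∨ G.Adj x y))
  | Sum.inr _, Sum.inr _ => inferInstanceAs (Decidable False)

/-- The vertex set of the ILT model at time `t`. -/
def ILTV (V : Type u) : ℕ → Type u
  | 0 => V
  | t + 1 => ILTV V t ⊕ ILTV V t

/-- The graph of the ILT model at time `t`, starting from `G`. -/
def ILTG (G : SimpleGraph V) : (t : ℕ) → SimpleGraph (ILTV V t)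
  | 0 => G
  | t + 1 => ILTstep (ILTG G t)

instance ILTVFintype [Fintype V] : ∀ t, Fintype (ILTV V t)
  | 0 => inferInstanceAs (Fintype V)
  | t + 1 => letI := ILTVFintype t
             inferInstanceAs (Fintype (ILTV V t ⊕ ILTV V t))

instance ILTVDecEq [DecidableEq V] : ∀ t, DecidableEq (ILTV V t)
  | 0 => inferInstanceAs (DecidableEq V)
  | t + 1 => letI := ILTVDecEq t
             inferInstanceAs (DecidableEq (ILTV V t ⊕ ILTV V t))

instance ILTGDecAdj (G : SimpleGraph V) [DecidableEq V] [DecidableRel G.Adj] :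
    ∀ t, DecidableRel (ILTG G t).Adj
  | 0 => inferInstanceAs (DecidableRel G.Adj)
  | t + 1 => letI : DecidableEq (ILTV V t) := ILTVDecEq t
             letI : DecidableRel (ILTG G t).Adj := ILTGDecAdj G t
             ILTstepDecAdj (ILTG G t)

/-- The volume of a graph: the sum of the degrees of its vertices. -/
def graphVol [Fintype V] (G : SimpleGraph V) [DecidableRel G.Adj] : ℕ :=
  ∑ v, G.degree v

/-- The Wiener index: the sum of distances over unordered pairs of vertices. -/
noncomputable def wienerIndex [Fintype V] (G : SimpleGraph V) : ℕ :=
  (∑ x : V, ∑ y : V, G.dist x y) / 2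

/-- The descendant of `x ∈ V(G_0)` at time `s.length` given by the binary sequence `s`
(read with the most recent time-step first), where `true` means the node is the clone
created at that step and `false` means the node persists from the previous step. -/
def descend (x : V) : (s : List Bool) → ILTV V s.length
  | [] => x
  | b :: rest =>
      if b then Sum.inr (descend x rest) else Sum.inl (descend x rest)

lemma filter_disjSum' {α β : Type*} (s : Finset α) (t : Finset β)
    (p : α ⊕ β → Prop) [DecidablePred p] :
    (s.disjSum t).filter p = (s.filter (p ∘ Sum.inl)).disjSum (t.filter (p ∘ Sum.inr)) := by
  ext (a | b) <;> simp

lemma filter_eq_or_adj [Fintype V] [DecidableEq V] (G : SimpleGraph V) [DecidableRel G.Adj]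
    (x : V) : (univ.filter (fun y => x = y ∨ G.Adj x y)).card = G.degree x + 1 := by
  have : (univ.filter (fun y => x = y ∨ G.Adj x y)) = insert x (univ.filter (G.Adj x)) := by
    ext y; simp [eq_comm, or_comm]
  rw [this, card_insert_of_notMem (by simp), degree]
  congr 1
  rw [neighborFinset_eq_filter]

lemma ILTstep_degree_inl [Fintype V] [DecidableEq V] (G : SimpleGraph V) [DecidableRel G.Adj]
    (x : V) : (ILTstep G).degree (Sum.inl x) = 2 * G.degree x + 1 := by
  rw [degree, neighborFinset_eq_filter]
  have huniv : (Finset.univ : Finset (V ⊕ V)) = Finset.univ.disjSum Finset.univ := rfl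
  rw [huniv, filter_disjSum', card_disjSum]
  have h1 : (univ.filter ((ILTstep G).Adj (Sum.inl x) ∘ Sum.inl)).card = G.degree x := by
    rw [degree, neighborFinset_eq_filter]; rfl
  have h2 : (univ.filter ((ILTstep G).Adj (Sum.inl x) ∘ Sum.inr)).card = G.degree x + 1 := by
    rw [← filter_eq_or_adj G x]; rfl
  rw [h1, h2]; ring

lemma ILTstep_degree_inr [Fintype V] [DecidableEq V] (G : SimpleGraph V) [DecidableRel G.Adj]
    (x : V) : (ILTstep G).degree (Sum.inr x) = G.degree x + 1 := by
  rw [degree, neighborFinset_eq_filter]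
  have huniv : (Finset.univ : Finset (V ⊕ V)) = Finset.univ.disjSum Finset.univ := rfl
  rw [huniv, filter_disjSum', card_disjSum]
  have h1 : (univ.filter ((ILTstep G).Adj (Sum.inr x) ∘ Sum.inl)).card = G.degree x + 1 := by
    rw [← filter_eq_or_adj G x]; rfl
  have h2 : (univ.filter ((ILTstep G).Adj (Sum.inr x) ∘ Sum.inr)).card = 0 := by
    simp only [card_eq_zero, filter_eq_empty_iff]
    intro y _; exact fun h => h
  rw [h1, h2]

theorem ILT_degree_bounds [Fintype V] [DecidableEq V]
    (G : SimpleGraph V) [DecidableRel G.Adj] (x : V) (s : List Bool) :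
    (2 ^ (s.count false) * ((G.degree x : ℤ) + 1) + (s.length : ℤ) - (s.count false : ℤ) - 1
        ≤ ((ILTG G s.length).degree (descend x s) : ℤ)) ∧
    (((ILTG G s.length).degree (descend x s) : ℤ)
        ≤ 2 ^ (s.count false) * ((G.degree x : ℤ) + (s.length : ℤ) - (s.count false : ℤ) + 1) - 1) := by
  induction s with
  | nil =>
    simp [descend, ILTG]
    constructor <;> exact le_of_eq (by congr)
  | cons b rest ih =>
    obtain ⟨ih1, ih2⟩ := ih
    have hk : (rest.count false : ℤ) ≤ (rest.length : ℤ) := by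
      exact_mod_cast List.count_le_length
    have hp : (1:ℤ) ≤ 2 ^ rest.count false := by exact_mod_cast Nat.one_le_two_pow
    cases b with
    | false =>
      have hdeg : ((ILTG G (false :: rest).length).degree (descend x (false :: rest)) : ℤ)
          = 2 * ((ILTG G rest.length).degree (descend x rest) : ℤ) + 1 := by
        have : (ILTG G (false :: rest).length).degree (descend x (false :: rest))
            = 2 * (ILTG G rest.length).degree (descend x rest) + 1 :=
          ILTstep_degree_inl (ILTG G rest.length) (descend x rest)
        exact_mod_cast this
      rw [hdeg]
      simp only [List.count_cons, List.length_cons]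
      norm_num
      rw [pow_succ]
      constructor <;> nlinarith [ih1, ih2, hp, hk]
    | true =>
      have hdeg : ((ILTG G (true :: rest).length).degree (descend x (true :: rest)) : ℤ)
          = ((ILTG G rest.length).degree (descend x rest) : ℤ) + 1 := by
        have : (ILTG G (true :: rest).length).degree (descend x (true :: rest))
            = (ILTG G rest.length).degree (descend x rest) + 1 :=
          ILTstep_degree_inr (ILTG G rest.length) (descend x rest)
        exact_mod_cast this
      rw [hdeg]
      simp only [List.count_cons, List.length_cons]
      norm_num
      constructor <;> nlinarith [ih1, ih2, hp, hk]
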